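/- Let s, t > 0, let F : ℝ^d × ℝ^d → [0, ∞) and G : ℝ^d × ℝ^d × ℝ^d × ℝ^d → [0, ∞) be measurable. Assume: (a) there exist C₀, r₁ > 0 such that F(y, η) ≤ C₀ e^{r₁(|y|^{1/t} + |η|^{1/s})} for all (y, η); (b) there exists μ > 0 such that for every b > 0 there exists C_b > 0 with G(z₁, z₂, ζ₁, ζ₂) ≤ C_b e^{μ(|z₁|^{1/t} + |z₂|^{1/s}) − b(|ζ₁|^{1/s} + |ζ₂|^{1/t})} for all z₁, z₂, ζ₁, ζ₂ ∈ ℝ^d; (c) V ⊆ ℝ^{2d} is a set such that for every r > 0 the supremum over λ > 0 and (x, ξ) ∈ V of e^{r λ} F(λ^t x, λ^s ξ) is finite. Let U ⊆ ℝ^{2d} be bounded and let ε ∈ (0,1] satisfy U + B_ε ⊆ V, with B_ε the open ball of radius ε in ℝ^{2d}. Then for every r > 0 the supremum over λ > 0 and (x, ξ) ∈ U of e^{r λ} ∫∫_{ℝ^d × ℝ^d} F(λ^t x − y, λ^s ξ − η) · G(λ^t x − y/2, λ^s ξ − η/2, η, −y) dy dη is finite. (This is the analytic core of the microlocality theorem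 WF^{t,s}(a^w(x,D)u) ⊆ WF^{t,s}(u) for symbols a in the class Γ_{t,s}^{s,t;0}: F plays the role of |V_φ u| and G of |V_Φ a|.) -/

import Mathlib

open MeasureTheory


lemma rpow_add_le2 {p a b : ℝ} (hp : 0 < p) (ha : 0 ≤ a) (hb : 0 ≤ b) :
    (a + b) ^ p ≤ 2 ^ p * (a ^ p + b ^ p) := by
  have hm : 0 ≤ max a b := le_max_of_le_left ha
  have h1 : a + b ≤ 2 * max a b := by
    rcases le_total a b with h | h
    · rw [max_eq_right h]; linarith
    · rw [max_eq_left h]; linarith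
  calc (a + b) ^ p ≤ (2 * max a b) ^ p :=
        Real.rpow_le_rpow (by linarith) h1 hp.le
    _ = 2 ^ p * (max a b) ^ p := Real.mul_rpow (by norm_num) hm
    _ ≤ 2 ^ p * (a ^ p + b ^ p) := by
        have : (max a b) ^ p ≤ a ^ p + b ^ p := by
          rcases le_total a b with h | h
          · rw [max_eq_right h]
            exact le_add_of_nonneg_left (Real.rpow_nonneg ha p)
          · rw [max_eq_left h]
            exact le_add_of_nonneg_right (Real.rpow_nonneg hb p)
        exact mul_le_mul_of_nonneg_left this (by positivity)

lemma integrable_exp_neg_rpow_norm (d : ℕ) {p : ℝ} (hp : 0 < p) :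
    Integrable (fun x : EuclideanSpace ℝ (Fin d) => Real.exp (-‖x‖ ^ p)) := by
  set ρ : ℝ := (d : ℝ) + 1 with hρ
  have hρ0 : 0 < ρ := by positivity
  set N : ℕ := ⌈ρ / p⌉₊ with hN
  have hNp : ρ ≤ (N : ℝ) * p := (div_le_iff₀ hp).mp (Nat.le_ceil _)
  set C : ℝ := 2 ^ ρ * (N.factorial : ℝ) with hC
  have hfac : (1 : ℝ) ≤ (N.factorial : ℝ) := by exact_mod_cast N.factorial_pos
  have hC0 : 0 < C := by positivity
  have key : ∀ x : EuclideanSpace ℝ (Fin d),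
      Real.exp (-‖x‖ ^ p) ≤ C * (1 + ‖x‖) ^ (-ρ) := by
    intro x
    set u := ‖x‖ with hu
    have hu0 : 0 ≤ u := norm_nonneg _
    have h1u : (0:ℝ) < 1 + u := by linarith
    have hup0 : (0:ℝ) ≤ u ^ p := Real.rpow_nonneg hu0 p
    have hexp1 : (1:ℝ) ≤ Real.exp (u ^ p) := Real.one_le_exp hup0
    have hmain : (1 + u) ^ ρ ≤ C * Real.exp (u ^ p) := by
      rcases le_total u 1 with h | h
      · calc (1 + u) ^ ρ ≤ 2 ^ ρ :=
              Real.rpow_le_rpow (by linarith) (by linarith) hρ0.le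
          _ = 2 ^ ρ * 1 * 1 := by ring
          _ ≤ C * Real.exp (u ^ p) := by
              rw [hC]
              exact mul_le_mul (mul_le_mul_of_nonneg_left hfac (by positivity)) hexp1
                one_pos.le (by positivity)
      · have hup : (u ^ p) ^ N / (N.factorial : ℝ) ≤ Real.exp (u ^ p) :=
          Real.pow_div_factorial_le_exp (x := u ^ p) hup0 N
        have h2 : (u ^ p) ^ N ≤ Real.exp (u ^ p) * (N.factorial : ℝ) := by
          rwa [div_le_iff₀ (by positivity)] at hup
        calc (1 + u) ^ ρ ≤ (2 * u) ^ ρ :=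
              Real.rpow_le_rpow (by linarith) (by linarith) hρ0.le
          _ = 2 ^ ρ * u ^ ρ := Real.mul_rpow (by norm_num) hu0
          _ ≤ 2 ^ ρ * u ^ ((N : ℝ) * p) :=
              mul_le_mul_of_nonneg_left (Real.rpow_le_rpow_of_exponent_le h hNp)
                (by positivity)
          _ = 2 ^ ρ * (u ^ p) ^ N := by
              rw [mul_comm (N:ℝ) p, Real.rpow_mul hu0, Real.rpow_natCast]
          _ ≤ 2 ^ ρ * (Real.exp (u ^ p) * (N.factorial : ℝ)) :=
              mul_le_mul_of_nonneg_left h2 (by positivity)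
          _ = C * Real.exp (u ^ p) := by rw [hC]; ring
    have hA : (0:ℝ) < (1 + u) ^ ρ := Real.rpow_pos_of_pos h1u ρ
    rw [Real.exp_neg, Real.rpow_neg h1u.le, ← div_eq_mul_inv, le_div_iff₀ hA,
      inv_mul_le_iff₀ (Real.exp_pos _), mul_comm]
    exact hmain
  have hmeas : Continuous (fun x : EuclideanSpace ℝ (Fin d) => Real.exp (-‖x‖ ^ p)) :=
    Real.continuous_exp.comp
      ((continuous_norm.rpow_const (fun x => Or.inr hp.le)).neg)
  refine ((integrable_one_add_norm (μ := (volume : Measure (EuclideanSpace ℝ (Fin d))))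
      (r := ρ) ?_).const_mul C).mono' hmeas.aestronglyMeasurable ?_
  · rw [finrank_euclideanSpace_fin]; simp [hρ]
  · filter_upwards with x
    rw [Real.norm_eq_abs, abs_of_nonneg (Real.exp_nonneg _)]
    exact key x

lemma norm_est {τ lam R u : ℝ} (hτ : 0 < τ) (hlam : 0 < lam) (hR : 0 ≤ R)
    (hu : 0 ≤ u) {a : ℝ} (ha : 0 ≤ a) (h : a ≤ lam ^ τ * R + u) :
    a ^ (1/τ) ≤ 2^(1/τ) * R^(1/τ) * lam + 2^(1/τ) * u^(1/τ) := by
  have hτ' : (0:ℝ) < 1/τ := by positivity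
  have hlt : 0 < lam ^ τ := Real.rpow_pos_of_pos hlam τ
  have h1 : a ^ (1/τ) ≤ (lam^τ * R + u)^(1/τ) := Real.rpow_le_rpow ha h hτ'.le
  have h2 := rpow_add_le2 hτ' (mul_nonneg hlt.le hR) hu
  have h3 : (lam^τ * R) ^ (1/τ) = lam * R^(1/τ) := by
    rw [Real.mul_rpow hlt.le hR, ← Real.rpow_mul hlam.le, mul_one_div_cancel hτ.ne',
      Real.rpow_one]
  calc a^(1/τ) ≤ (lam^τ*R + u)^(1/τ) := h1
    _ ≤ 2^(1/τ) * ((lam^τ*R)^(1/τ) + u^(1/τ)) := h2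
    _ = 2^(1/τ)*R^(1/τ)*lam + 2^(1/τ)*u^(1/τ) := by rw [h3]; ring


lemma sum_est {Kt Ks K X1 X2 lam a b a' b' : ℝ} (hKtK : Kt ≤ K) (hKsK : Ks ≤ K)
    (ha : 0 ≤ a) (hb : 0 ≤ b) (h1 : a' ≤ Kt * X1 * lam + Kt * a)
    (h2 : b' ≤ Ks * X2 * lam + Ks * b) :
    a' + b' ≤ (Kt * X1 + Ks * X2) * lam + K * (a + b) := by
  nlinarith [mul_nonneg (sub_nonneg.2 hKtK) ha, mul_nonneg (sub_nonneg.2 hKsK) hb]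

lemma lower_est₁ {cc e lam a b X : ℝ} (h1 : X ≤ a) (h2 : X = e * lam)
    (h4 : cc * lam ≤ e * lam) (hb : 0 ≤ b) : cc * lam ≤ a + b := by linarith

lemma lower_est₂ {cc e lam a b X : ℝ} (h1 : X ≤ b) (h2 : X = e * lam)
    (h4 : cc * lam ≤ e * lam) (ha : 0 ≤ a) : cc * lam ≤ a + b := by linarith

lemma sq_sum_lt {x y ε : ℝ} (h1 : x ≤ (ε/2) ^ 2) (h2 : y ≤ (ε/2) ^ 2)
    (h3 : 0 < ε ^ 2) : x + y < ε ^ 2 := by nlinarith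

set_option maxHeartbeats 2000000 in
/-- The analytic core of the microlocality theorem
`WF^{t,s}(a^w(x,D)u) ⊆ WF^{t,s}(u)` for symbols in `Γ_{t,s}^{s,t;0}`:
here `F` plays the role of `|V_φ u|` and `G` of `|V_Φ a|`. -/
theorem microlocality_core (d : ℕ) (s t : ℝ) (hs : 0 < s) (ht : 0 < t)
    (F : EuclideanSpace ℝ (Fin d) × EuclideanSpace ℝ (Fin d) → ℝ)
    (G : EuclideanSpace ℝ (Fin d) × EuclideanSpace ℝ (Fin d) ×
         EuclideanSpace ℝ (Fin d) × EuclideanSpace ℝ (Fin d) → ℝ)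
    (hFmeas : Measurable F) (hGmeas : Measurable G)
    (hF0 : ∀ z, 0 ≤ F z) (hG0 : ∀ z, 0 ≤ G z)
    (ha : ∃ C₀ : ℝ, 0 < C₀ ∧ ∃ r₁ : ℝ, 0 < r₁ ∧ ∀ z,
      F z ≤ C₀ * Real.exp (r₁ * (‖z.1‖ ^ (1 / t) + ‖z.2‖ ^ (1 / s))))
    (hbG : ∃ μ : ℝ, 0 < μ ∧ ∀ b : ℝ, 0 < b → ∃ C : ℝ, 0 < C ∧
      ∀ z₁ z₂ ζ₁ ζ₂ : EuclideanSpace ℝ (Fin d),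
        G (z₁, z₂, ζ₁, ζ₂) ≤ C * Real.exp (μ * (‖z₁‖ ^ (1 / t) + ‖z₂‖ ^ (1 / s)) -
          b * (‖ζ₁‖ ^ (1 / s) + ‖ζ₂‖ ^ (1 / t))))
    (U V : Set (EuclideanSpace ℝ (Fin d) × EuclideanSpace ℝ (Fin d)))
    (hc : ∀ r : ℝ, 0 < r → ∃ C : ℝ, ∀ lam : ℝ, 0 < lam → ∀ p ∈ V,
      Real.exp (r * lam) * F (lam ^ t • p.1, lam ^ s • p.2) ≤ C)
    (hU : Bornology.IsBounded U) (ε : ℝ) (hε : 0 < ε) (hε1 : ε ≤ 1)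
    (hUV : ∀ p ∈ U, ∀ q : EuclideanSpace ℝ (Fin d) × EuclideanSpace ℝ (Fin d),
      ‖q.1‖ ^ 2 + ‖q.2‖ ^ 2 < ε ^ 2 → p + q ∈ V) :
    ∀ r : ℝ, 0 < r → ∃ C : ℝ, ∀ lam : ℝ, 0 < lam → ∀ p ∈ U,
      Real.exp (r * lam) *
        (∫ w : EuclideanSpace ℝ (Fin d) × EuclideanSpace ℝ (Fin d),
          F (lam ^ t • p.1 - w.1, lam ^ s • p.2 - w.2) *
            G (lam ^ t • p.1 - (2 : ℝ)⁻¹ • w.1, lam ^ s • p.2 - (2 : ℝ)⁻¹ • w.2,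
               w.2, -w.1)) ≤ C := by
  obtain ⟨C₀, hC₀, r₁, hr₁, hFb⟩ := ha
  obtain ⟨μ, hμ, hG⟩ := hbG
  obtain ⟨R₀, hR₀⟩ := hU.subset_closedBall 0
  set R : ℝ := max R₀ 0 with hRdef
  have hR : 0 ≤ R := le_max_right _ _
  have hUR : ∀ p ∈ U, ‖p.1‖ ≤ R ∧ ‖p.2‖ ≤ R := by
    intro p hp
    have h := hR₀ hp
    rw [Metric.mem_closedBall, dist_zero_right] at h
    have h0 : R₀ ≤ R := le_max_left _ _
    exact ⟨(norm_fst_le p).trans (h.trans h0), (norm_snd_le p).trans (h.trans h0)⟩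
  intro r hr
  set Kt : ℝ := 2 ^ (1/t) with hKt
  set Ks : ℝ := 2 ^ (1/s) with hKs
  have hKt0 : 0 < Kt := Real.rpow_pos_of_pos two_pos _
  have hKs0 : 0 < Ks := Real.rpow_pos_of_pos two_pos _
  set K : ℝ := Kt + Ks with hKdef
  have hK0 : 0 < K := by positivity
  have hKtK : Kt ≤ K := le_add_of_nonneg_right hKs0.le
  have hKsK : Ks ≤ K := le_add_of_nonneg_left hKt0.le
  set M : ℝ := Kt * R ^ (1/t) + Ks * R ^ (1/s) with hMdef
  have hM : 0 ≤ M := by positivity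
  set cc : ℝ := min ((ε/2) ^ (1/t)) ((ε/2) ^ (1/s)) with hccdef
  have hcc0 : 0 < cc :=
    lt_min (Real.rpow_pos_of_pos (by linarith) _) (Real.rpow_pos_of_pos (by linarith) _)
  obtain ⟨Cg1, hCg1, hGb1⟩ := hG (μ * K + 1) (by positivity)
  set A : ℝ := r + (r₁ + μ) * M with hAdef
  have hA0 : 0 < A := by positivity
  obtain ⟨Cg2, hCg2, hGb2⟩ := hG ((r₁ + μ) * K + 1 + A / cc) (by positivity)
  obtain ⟨C₂, hC₂⟩ := hc (r + μ * M + 1) (by positivity)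
  set C₂' : ℝ := max C₂ 0 with hC₂'def
  have hC₂'0 : 0 ≤ C₂' := le_max_right _ _
  set D : ℝ := C₂' * Cg1 + C₀ * Cg2 with hDdef
  have hD : 0 ≤ D := by positivity
  -- integrable dominating function
  have hIprod : Integrable (fun w : EuclideanSpace ℝ (Fin d) × EuclideanSpace ℝ (Fin d) =>
      D * Real.exp (-(‖w.1‖ ^ (1/t) + ‖w.2‖ ^ (1/s)))) := by
    have h1 := integrable_exp_neg_rpow_norm d (show (0:ℝ) < 1/t by positivity)
    have h2 := integrable_exp_neg_rpow_norm d (show (0:ℝ) < 1/s by positivity)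
    have h := (h1.mul_prod h2).const_mul D
    have heq : (fun w : EuclideanSpace ℝ (Fin d) × EuclideanSpace ℝ (Fin d) =>
        D * Real.exp (-(‖w.1‖ ^ (1/t) + ‖w.2‖ ^ (1/s)))) =
        fun w => D * (Real.exp (-‖w.1‖ ^ (1/t)) * Real.exp (-‖w.2‖ ^ (1/s))) := by
      funext w; rw [← Real.exp_add]; ring_nf
    rw [heq, MeasureTheory.Measure.volume_eq_prod]
    exact h
  refine ⟨∫ w : EuclideanSpace ℝ (Fin d) × EuclideanSpace ℝ (Fin d),
      D * Real.exp (-(‖w.1‖ ^ (1/t) + ‖w.2‖ ^ (1/s))), ?_⟩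
  intro lam hlam p hp
  obtain ⟨hp1, hp2⟩ := hUR p hp
  have hlt : (0:ℝ) < lam ^ t := Real.rpow_pos_of_pos hlam t
  have hls : (0:ℝ) < lam ^ s := Real.rpow_pos_of_pos hlam s
  have hXn : ‖lam ^ t • p.1‖ ≤ lam ^ t * R := by
    rw [norm_smul, Real.norm_eq_abs, abs_of_pos hlt]
    exact mul_le_mul_of_nonneg_left hp1 hlt.le
  have hΞn : ‖lam ^ s • p.2‖ ≤ lam ^ s * R := by
    rw [norm_smul, Real.norm_eq_abs, abs_of_pos hls]
    exact mul_le_mul_of_nonneg_left hp2 hls.le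
  -- the key pointwise bound
  have key : ∀ y η : EuclideanSpace ℝ (Fin d),
      Real.exp (r * lam) * (F (lam ^ t • p.1 - y, lam ^ s • p.2 - η) *
        G (lam ^ t • p.1 - (2 : ℝ)⁻¹ • y, lam ^ s • p.2 - (2 : ℝ)⁻¹ • η, η, -y))
      ≤ D * Real.exp (-(‖y‖ ^ (1/t) + ‖η‖ ^ (1/s))) := by
    intro y η
    set S : ℝ := ‖y‖ ^ (1/t) + ‖η‖ ^ (1/s) with hSdef
    have hy0 : (0:ℝ) ≤ ‖y‖ ^ (1/t) := Real.rpow_nonneg (norm_nonneg _) _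
    have hη0 : (0:ℝ) ≤ ‖η‖ ^ (1/s) := Real.rpow_nonneg (norm_nonneg _) _
    have hS0 : 0 ≤ S := by rw [hSdef]; positivity
    -- norm estimates
    have hz1F : ‖lam ^ t • p.1 - y‖ ≤ lam ^ t * R + ‖y‖ :=
      (norm_sub_le _ _).trans (add_le_add hXn le_rfl)
    have hz2F : ‖lam ^ s • p.2 - η‖ ≤ lam ^ s * R + ‖η‖ :=
      (norm_sub_le _ _).trans (add_le_add hΞn le_rfl)
    have hhalf : ∀ v : EuclideanSpace ℝ (Fin d), ‖(2:ℝ)⁻¹ • v‖ ≤ ‖v‖ := by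
      intro v
      rw [norm_smul, Real.norm_eq_abs, abs_of_pos (by norm_num : (0:ℝ) < 2⁻¹)]
      exact mul_le_of_le_one_left (norm_nonneg v) (by norm_num)
    have hz1G : ‖lam ^ t • p.1 - (2:ℝ)⁻¹ • y‖ ≤ lam ^ t * R + ‖y‖ :=
      (norm_sub_le _ _).trans (add_le_add hXn (hhalf y))
    have hz2G : ‖lam ^ s • p.2 - (2:ℝ)⁻¹ • η‖ ≤ lam ^ s * R + ‖η‖ :=
      (norm_sub_le _ _).trans (add_le_add hΞn (hhalf η))
    have hestF1 : ‖lam ^ t • p.1 - y‖ ^ (1/t) ≤ Kt * R^(1/t) * lam + Kt * ‖y‖^(1/t) := by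
      rw [hKt]; exact norm_est ht hlam hR (norm_nonneg y) (norm_nonneg _) hz1F
    have hestF2 : ‖lam ^ s • p.2 - η‖ ^ (1/s) ≤ Ks * R^(1/s) * lam + Ks * ‖η‖^(1/s) := by
      rw [hKs]; exact norm_est hs hlam hR (norm_nonneg η) (norm_nonneg _) hz2F
    have hestG1 : ‖lam ^ t • p.1 - (2:ℝ)⁻¹ • y‖ ^ (1/t) ≤ Kt * R^(1/t) * lam + Kt * ‖y‖^(1/t) := by
      rw [hKt]; exact norm_est ht hlam hR (norm_nonneg y) (norm_nonneg _) hz1G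
    have hestG2 : ‖lam ^ s • p.2 - (2:ℝ)⁻¹ • η‖ ^ (1/s) ≤ Ks * R^(1/s) * lam + Ks * ‖η‖^(1/s) := by
      rw [hKs]; exact norm_est hs hlam hR (norm_nonneg η) (norm_nonneg _) hz2G
    have hsumF : ‖lam ^ t • p.1 - y‖ ^ (1/t) + ‖lam ^ s • p.2 - η‖ ^ (1/s)
        ≤ M * lam + K * S := by
      rw [hMdef, hSdef]
      exact sum_est hKtK hKsK hy0 hη0 hestF1 hestF2
    have hsumG : ‖lam ^ t • p.1 - (2:ℝ)⁻¹ • y‖ ^ (1/t) +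
        ‖lam ^ s • p.2 - (2:ℝ)⁻¹ • η‖ ^ (1/s) ≤ M * lam + K * S := by
      rw [hMdef, hSdef]
      exact sum_est hKtK hKsK hy0 hη0 hestG1 hestG2
    have hζ : ‖η‖ ^ (1/s) + ‖-y‖ ^ (1/t) = S := by
      rw [norm_neg, hSdef]; ring
    by_cases hcase : ‖y‖ ≤ ε/2 * lam ^ t ∧ ‖η‖ ≤ ε/2 * lam ^ s
    · -- small region: use hc through V
      obtain ⟨hcy, hcη⟩ := hcase
      set q : EuclideanSpace ℝ (Fin d) × EuclideanSpace ℝ (Fin d) :=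
        (-((lam ^ t)⁻¹ • y), -((lam ^ s)⁻¹ • η)) with hqdef
      have hq1 : ‖q.1‖ ≤ ε/2 := by
        rw [hqdef]
        simp only [norm_neg, norm_smul, Real.norm_eq_abs, abs_of_pos (inv_pos.mpr hlt)]
        rw [inv_mul_le_iff₀ hlt, mul_comm]
        exact hcy
      have hq2 : ‖q.2‖ ≤ ε/2 := by
        rw [hqdef]
        simp only [norm_neg, norm_smul, Real.norm_eq_abs, abs_of_pos (inv_pos.mpr hls)]
        rw [inv_mul_le_iff₀ hls, mul_comm]
        exact hcη
      have hpq : p + q ∈ V := by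
        refine hUV p hp q ?_
        exact sq_sum_lt (pow_le_pow_left₀ (norm_nonneg _) hq1 2)
          (pow_le_pow_left₀ (norm_nonneg _) hq2 2) (by positivity)
      have hFc := hC₂ lam hlam (p + q) hpq
      have he1 : lam ^ t • (p + q).1 = lam ^ t • p.1 - y := by
        rw [hqdef]
        show lam ^ t • (p.1 + -((lam ^ t)⁻¹ • y)) = _
        rw [smul_add, smul_neg, smul_smul, mul_inv_cancel₀ hlt.ne', one_smul,
          sub_eq_add_neg]
      have he2 : lam ^ s • (p + q).2 = lam ^ s • p.2 - η := by
        rw [hqdef]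
        show lam ^ s • (p.2 + -((lam ^ s)⁻¹ • η)) = _
        rw [smul_add, smul_neg, smul_smul, mul_inv_cancel₀ hls.ne', one_smul,
          sub_eq_add_neg]
      rw [he1, he2] at hFc
      have hF' : F (lam ^ t • p.1 - y, lam ^ s • p.2 - η) ≤
          C₂' * Real.exp (-((r + μ * M + 1) * lam)) := by
        rw [Real.exp_neg, ← div_eq_mul_inv, le_div_iff₀ (Real.exp_pos _)]
        calc F (lam ^ t • p.1 - y, lam ^ s • p.2 - η) * Real.exp ((r + μ * M + 1) * lam)
            = Real.exp ((r + μ * M + 1) * lam) * F (lam ^ t • p.1 - y, lam ^ s • p.2 - η) := by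
              ring
          _ ≤ C₂ := hFc
          _ ≤ C₂' := le_max_left _ _
      have hG' : G (lam ^ t • p.1 - (2:ℝ)⁻¹ • y, lam ^ s • p.2 - (2:ℝ)⁻¹ • η, η, -y) ≤
          Cg1 * Real.exp (μ * (M * lam + K * S) - (μ * K + 1) * S) := by
        refine (hGb1 _ _ η (-y)).trans ?_
        refine mul_le_mul_of_nonneg_left (Real.exp_le_exp.mpr ?_) hCg1.le
        rw [hζ]
        exact sub_le_sub_right (mul_le_mul_of_nonneg_left hsumG hμ.le) _
      calc Real.exp (r * lam) * (F (lam ^ t • p.1 - y, lam ^ s • p.2 - η) *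
            G (lam ^ t • p.1 - (2:ℝ)⁻¹ • y, lam ^ s • p.2 - (2:ℝ)⁻¹ • η, η, -y))
          ≤ Real.exp (r * lam) * ((C₂' * Real.exp (-((r + μ * M + 1) * lam))) *
            (Cg1 * Real.exp (μ * (M * lam + K * S) - (μ * K + 1) * S))) := by
            refine mul_le_mul_of_nonneg_left ?_ (Real.exp_nonneg _)
            exact mul_le_mul hF' hG' (hG0 _) (by positivity)
        _ = (C₂' * Cg1) * Real.exp (r * lam + (-((r + μ * M + 1) * lam)) +
            (μ * (M * lam + K * S) - (μ * K + 1) * S)) := by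
            rw [Real.exp_add, Real.exp_add]; ring
        _ ≤ (C₂' * Cg1) * Real.exp (-S) := by
            refine mul_le_mul_of_nonneg_left (Real.exp_le_exp.mpr ?_) (by positivity)
            have heq2 : r * lam + (-((r + μ * M + 1) * lam)) +
                (μ * (M * lam + K * S) - (μ * K + 1) * S) = -S - lam := by ring
            rw [heq2]
            exact sub_le_self _ hlam.le
        _ ≤ D * Real.exp (-S) := by
            refine mul_le_mul_of_nonneg_right ?_ (Real.exp_nonneg _)
            rw [hDdef]
            exact le_add_of_nonneg_right (mul_pos hC₀ hCg2).le
    · -- large region: crude bound on F, strong decay of G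
      have hScc : cc * lam ≤ S := by
        rcases not_and_or.mp hcase with h | h
        · have h' : ε/2 * lam ^ t ≤ ‖y‖ := (not_le.mp h).le
          have h1 : ((ε/2) * lam ^ t) ^ (1/t) ≤ ‖y‖ ^ (1/t) :=
            Real.rpow_le_rpow (by positivity) h' (by positivity)
          have h2 : ((ε/2) * lam ^ t) ^ (1/t) = (ε/2) ^ (1/t) * lam := by
            rw [Real.mul_rpow (by linarith) hlt.le, ← Real.rpow_mul hlam.le,
              mul_one_div_cancel ht.ne', Real.rpow_one]
          have h3 : cc ≤ (ε/2) ^ (1/t) := min_le_left _ _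
          have h4 : cc * lam ≤ (ε/2) ^ (1/t) * lam :=
            mul_le_mul_of_nonneg_right h3 hlam.le
          rw [hSdef]
          exact lower_est₁ h1 h2 h4 hη0
        · have h' : ε/2 * lam ^ s ≤ ‖η‖ := (not_le.mp h).le
          have h1 : ((ε/2) * lam ^ s) ^ (1/s) ≤ ‖η‖ ^ (1/s) :=
            Real.rpow_le_rpow (by positivity) h' (by positivity)
          have h2 : ((ε/2) * lam ^ s) ^ (1/s) = (ε/2) ^ (1/s) * lam := by
            rw [Real.mul_rpow (by linarith) hls.le, ← Real.rpow_mul hlam.le,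
              mul_one_div_cancel hs.ne', Real.rpow_one]
          have h3 : cc ≤ (ε/2) ^ (1/s) := min_le_right _ _
          have h4 : cc * lam ≤ (ε/2) ^ (1/s) * lam :=
            mul_le_mul_of_nonneg_right h3 hlam.le
          rw [hSdef]
          exact lower_est₂ h1 h2 h4 hy0
      have hF' : F (lam ^ t • p.1 - y, lam ^ s • p.2 - η) ≤
          C₀ * Real.exp (r₁ * (M * lam + K * S)) := by
        refine (hFb _).trans ?_
        refine mul_le_mul_of_nonneg_left (Real.exp_le_exp.mpr ?_) hC₀.le
        exact mul_le_mul_of_nonneg_left hsumF hr₁.le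
      have hG' : G (lam ^ t • p.1 - (2:ℝ)⁻¹ • y, lam ^ s • p.2 - (2:ℝ)⁻¹ • η, η, -y) ≤
          Cg2 * Real.exp (μ * (M * lam + K * S) - ((r₁ + μ) * K + 1 + A / cc) * S) := by
        refine (hGb2 _ _ η (-y)).trans ?_
        refine mul_le_mul_of_nonneg_left (Real.exp_le_exp.mpr ?_) hCg2.le
        rw [hζ]
        exact sub_le_sub_right (mul_le_mul_of_nonneg_left hsumG hμ.le) _
      calc Real.exp (r * lam) * (F (lam ^ t • p.1 - y, lam ^ s • p.2 - η) *
            G (lam ^ t • p.1 - (2:ℝ)⁻¹ • y, lam ^ s • p.2 - (2:ℝ)⁻¹ • η, η, -y))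
          ≤ Real.exp (r * lam) * ((C₀ * Real.exp (r₁ * (M * lam + K * S))) *
            (Cg2 * Real.exp (μ * (M * lam + K * S) - ((r₁ + μ) * K + 1 + A / cc) * S))) := by
            refine mul_le_mul_of_nonneg_left ?_ (Real.exp_nonneg _)
            exact mul_le_mul hF' hG' (hG0 _) (by positivity)
        _ = (C₀ * Cg2) * Real.exp (r * lam + r₁ * (M * lam + K * S) +
            (μ * (M * lam + K * S) - ((r₁ + μ) * K + 1 + A / cc) * S)) := by
            rw [Real.exp_add, Real.exp_add]; ring
        _ ≤ (C₀ * Cg2) * Real.exp (-S) := by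
            refine mul_le_mul_of_nonneg_left (Real.exp_le_exp.mpr ?_) (by positivity)
            have heq : r * lam + r₁ * (M * lam + K * S) +
                (μ * (M * lam + K * S) - ((r₁ + μ) * K + 1 + A / cc) * S)
                = A * lam - S - (A / cc) * S := by
              rw [hAdef]; ring
            rw [heq]
            have h1 : A / cc * (cc * lam) ≤ A / cc * S :=
              mul_le_mul_of_nonneg_left hScc (by positivity)
            have h2 : A / cc * (cc * lam) = A * lam := by
              field_simp
            have h5 : A * lam - A / cc * S ≤ 0 := sub_nonpos.2 (h2 ▸ h1)
            have heq3 : A * lam - S - A / cc * S = (A * lam - A / cc * S) - S := by ring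
            rw [heq3]
            exact (sub_le_sub_right h5 S).trans_eq (zero_sub S)
        _ ≤ D * Real.exp (-S) := by
            refine mul_le_mul_of_nonneg_right ?_ (Real.exp_nonneg _)
            rw [hDdef]
            exact le_add_of_nonneg_left (mul_nonneg hC₂'0 hCg1.le)
  -- integrate the pointwise bound
  have hle : ∀ w : EuclideanSpace ℝ (Fin d) × EuclideanSpace ℝ (Fin d),
      F (lam ^ t • p.1 - w.1, lam ^ s • p.2 - w.2) *
        G (lam ^ t • p.1 - (2:ℝ)⁻¹ • w.1, lam ^ s • p.2 - (2:ℝ)⁻¹ • w.2, w.2, -w.1)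
      ≤ Real.exp (-(r * lam)) * (D * Real.exp (-(‖w.1‖ ^ (1/t) + ‖w.2‖ ^ (1/s)))) := by
    intro w
    have hk := key w.1 w.2
    have heq : F (lam ^ t • p.1 - w.1, lam ^ s • p.2 - w.2) *
        G (lam ^ t • p.1 - (2:ℝ)⁻¹ • w.1, lam ^ s • p.2 - (2:ℝ)⁻¹ • w.2, w.2, -w.1)
        = Real.exp (-(r * lam)) * (Real.exp (r * lam) *
          (F (lam ^ t • p.1 - w.1, lam ^ s • p.2 - w.2) *
          G (lam ^ t • p.1 - (2:ℝ)⁻¹ • w.1, lam ^ s • p.2 - (2:ℝ)⁻¹ • w.2, w.2, -w.1))) := by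
      rw [← mul_assoc, ← Real.exp_add, neg_add_cancel, Real.exp_zero, one_mul]
    rw [heq]
    exact mul_le_mul_of_nonneg_left hk (Real.exp_nonneg _)
  have hmono := integral_mono_of_nonneg
    (f := fun w : EuclideanSpace ℝ (Fin d) × EuclideanSpace ℝ (Fin d) =>
      F (lam ^ t • p.1 - w.1, lam ^ s • p.2 - w.2) *
        G (lam ^ t • p.1 - (2:ℝ)⁻¹ • w.1, lam ^ s • p.2 - (2:ℝ)⁻¹ • w.2, w.2, -w.1))
    (g := fun w => Real.exp (-(r * lam)) * (D * Real.exp (-(‖w.1‖ ^ (1/t) + ‖w.2‖ ^ (1/s)))))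
    (ae_of_all _ fun w => mul_nonneg (hF0 _) (hG0 _))
    (hIprod.const_mul _)
    (ae_of_all _ hle)
  rw [integral_const_mul] at hmono
  calc Real.exp (r * lam) * _ ≤ Real.exp (r * lam) * (Real.exp (-(r * lam)) *
        ∫ w : EuclideanSpace ℝ (Fin d) × EuclideanSpace ℝ (Fin d),
          D * Real.exp (-(‖w.1‖ ^ (1/t) + ‖w.2‖ ^ (1/s)))) :=
        mul_le_mul_of_nonneg_left hmono (Real.exp_nonneg _)
    _ = _ := by rw [← mul_assoc, ← Real.exp_add, add_neg_cancel, Real.exp_zero, one_mul]
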